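/- Suppose there exist constants K > 0 and M > 0 such that for all u ≥ 0, N(2·max(u^{1/2}, u^{1/α̃}), T, ‖·‖) ≤ exp(Ku), where 1 < α̃ < 2 and α = α̃/(α̃-1) > 2. Then for all δ > 0: if δ ≥ 2M then (1/K) log N(δ, T, ‖·‖) ≤ (2M/δ)², and if 0 < δ ≤ 2M then (1/K) log N(δ, T, ‖·‖) ≤ (2M/δ)^α. (Here the hypothesis is applied to all rescalings sT with sM playing the role of u.) -/

import Mathlib

open Pointwise
open scoped Classical

/-- The `δ`-covering number of `T ⊆ ℝⁿ`: minimal number of closed balls of radius `δ`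
(with arbitrary centers) needed to cover `T`. -/
noncomputable def coverNum (n : ℕ) (δ : ℝ) (T : Set (EuclideanSpace ℝ (Fin n))) : ℕ :=
  sInf {N : ℕ | ∃ C : Finset (EuclideanSpace ℝ (Fin n)), C.card = N ∧
    T ⊆ ⋃ c ∈ C, Metric.closedBall c δ}


lemma cover_smul {n : ℕ} {s δ : ℝ} (hs : 0 < s) {T : Set (EuclideanSpace ℝ (Fin n))}
    {C : Finset (EuclideanSpace ℝ (Fin n))}
    (h : T ⊆ ⋃ c ∈ C, Metric.closedBall c δ) :
    s • T ⊆ ⋃ c ∈ C.image (s • ·), Metric.closedBall c (s * δ) := by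
  rintro _ ⟨x, hx, rfl⟩
  obtain ⟨c, hc, hxc⟩ := Set.mem_iUnion₂.1 (h hx)
  refine Set.mem_iUnion₂.2 ⟨s • c, Finset.mem_image_of_mem _ hc, ?_⟩
  rw [Metric.mem_closedBall] at *
  rw [dist_smul₀, Real.norm_eq_abs, abs_of_pos hs]
  exact mul_le_mul_of_nonneg_left hxc hs.le

lemma coverNum_smul (n : ℕ) {s : ℝ} (δ : ℝ) (hs : 0 < s) (T : Set (EuclideanSpace ℝ (Fin n))) :
    coverNum n (s * δ) (s • T) = coverNum n δ T := by
  unfold coverNum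
  congr 1
  ext N
  constructor
  · rintro ⟨C, hcard, hcov⟩
    refine ⟨C.image (s⁻¹ • ·), ?_, ?_⟩
    · rw [Finset.card_image_of_injective _ (smul_right_injective _ (by positivity)), hcard]
    · have := cover_smul (s := s⁻¹) (by positivity) hcov
      rwa [inv_smul_smul₀ hs.ne', inv_mul_cancel_left₀ hs.ne'] at this
  · rintro ⟨C, hcard, hcov⟩
    exact ⟨C.image (s • ·),
      by rw [Finset.card_image_of_injective _ (smul_right_injective _ hs.ne'), hcard],
      cover_smul hs hcov⟩

theorem stmt_8 (n : ℕ) (K M αt α : ℝ) (hK : 0 < K) (hM : 0 < M)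
    (h1 : 1 < αt) (h2 : αt < 2) (hα : α = αt / (αt - 1))
    (T : Set (EuclideanSpace ℝ (Fin n)))
    (hcov : ∀ s : ℝ, 0 < s →
      (coverNum n (2 * max ((s * M) ^ ((1 : ℝ) / 2)) ((s * M) ^ (1 / αt))) (s • T) : ℝ)
        ≤ Real.exp (K * (s * M))) :
    ∀ δ : ℝ, 0 < δ →
      (2 * M ≤ δ → (1 / K) * Real.log (coverNum n δ T) ≤ (2 * M / δ) ^ 2) ∧
      (δ ≤ 2 * M → (1 / K) * Real.log (coverNum n δ T) ≤ (2 * M / δ) ^ α) := by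
  intro δ hδ
  have hαt0 : 0 < αt - 1 := by linarith
  have hx : 0 < 2 * M / δ := by positivity
  have h12 : (1:ℝ)/2 ≤ 1/αt := by
    rw [div_le_div_iff₀ (by norm_num) (by linarith)]; linarith
  -- main helper: if s*δ matches the radius from hcov, conclude the bound
  have main : ∀ s : ℝ, 0 < s →
      s * δ = 2 * max ((s * M) ^ ((1:ℝ)/2)) ((s * M) ^ (1/αt)) →
      (1 / K) * Real.log (coverNum n δ T) ≤ s * M := by
    intro s hs heq
    have hle : (coverNum n δ T : ℝ) ≤ Real.exp (K * (s * M)) := by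
      have := hcov s hs
      rwa [← heq, coverNum_smul n δ hs T] at this
    rcases Nat.eq_zero_or_pos (coverNum n δ T) with h0 | h1'
    · rw [h0]; simp [Real.log_zero]; positivity
    · have hlog : Real.log (coverNum n δ T) ≤ K * (s * M) := by
        rw [← Real.log_exp (K * (s * M))]
        exact Real.log_le_log (by exact_mod_cast h1') hle
      calc (1/K) * Real.log (coverNum n δ T) ≤ (1/K) * (K * (s * M)) :=
            mul_le_mul_of_nonneg_left hlog (by positivity)
        _ = s * M := by field_simp
  constructor
  · intro hd
    set s : ℝ := 4 * M / δ ^ 2 with hsdef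
    have hs : 0 < s := by positivity
    have hsM : s * M = (2 * M / δ) ^ 2 := by rw [hsdef]; field_simp; ring
    have hsMr : s * M = (2 * M / δ) ^ (2:ℝ) := by
      rw [hsM, ← Real.rpow_natCast (2*M/δ) 2]; norm_num
    have hx1 : 2 * M / δ ≤ 1 := by rw [div_le_one hδ]; linarith
    have hhalf : (s * M) ^ ((1:ℝ)/2) = 2 * M / δ := by
      rw [hsMr, ← Real.rpow_mul hx.le]; norm_num
    have hmax : max ((s * M) ^ ((1:ℝ)/2)) ((s * M) ^ (1/αt)) = (s * M) ^ ((1:ℝ)/2) := by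
      apply max_eq_left
      apply Real.rpow_le_rpow_of_exponent_ge (by positivity) _ h12
      rw [hsM]; nlinarith
    have heq : s * δ = 2 * max ((s * M) ^ ((1:ℝ)/2)) ((s * M) ^ (1/αt)) := by
      rw [hmax, hhalf, hsdef]; field_simp; ring
    have := main s hs heq
    rwa [hsM] at this
  · intro hd
    have hαpos : 0 < α := by rw [hα]; positivity
    have hααt : α / αt = α - 1 := by rw [hα]; field_simp; ring
    set s : ℝ := (2 * M / δ) ^ α / M with hsdef
    have hxα : 0 < (2 * M / δ) ^ α := Real.rpow_pos_of_pos hx α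
    have hs : 0 < s := by positivity
    have hsM : s * M = (2 * M / δ) ^ α := by rw [hsdef, div_mul_cancel₀ _ hM.ne']
    have hx1 : 1 ≤ 2 * M / δ := by rw [le_div_iff₀ hδ]; linarith
    have hsM1 : 1 ≤ s * M := by rw [hsM]; exact Real.one_le_rpow hx1 hαpos.le
    have hmax : max ((s * M) ^ ((1:ℝ)/2)) ((s * M) ^ (1/αt)) = (s * M) ^ ((1:ℝ)/αt) := by
      exact max_eq_right (Real.rpow_le_rpow_of_exponent_le hsM1 h12)
    have hαt' : (s * M) ^ ((1:ℝ)/αt) = (2 * M / δ) ^ (α - 1) := by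
      rw [hsM, ← Real.rpow_mul hx.le, mul_one_div, hααt]
    have heq : s * δ = 2 * max ((s * M) ^ ((1:ℝ)/2)) ((s * M) ^ (1/αt)) := by
      rw [hmax, hαt', hsdef]
      have : (2 * M / δ) ^ α = (2 * M / δ) ^ (α - 1) * (2 * M / δ) := by
        rw [← Real.rpow_add_one hx.ne' (α - 1)]; ring_nf
      rw [this]; field_simp
    have := main s hs heq
    rwa [hsM] at this
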